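/- Let G be a group with finite generating set A. Then G is non-amenable if and only if G admits a doubling function, i.e. a map ψ : G → G such that the word-metric distances d(g, ψ(g)) are bounded above by a constant K > 0 over all g ∈ G, and every element of G has at least two preimages under ψ. -/

import Mathlib

/-- The group element corresponding to a letter `(i, b)`: the generator `A i` itself if
`b = true`, and its inverse if `b = false`. -/
def genOf {G : Type*} [Group G] {ι : Type*} (A : ι → G) : ι × Bool → G :=
  fun s => if s.2 then A s.1 else (A s.1)⁻¹

/-- A group is amenable if there is a finitely additive normalized right-invariant mean on
the set of all its subsets. -/
def IsAmenable (G : Type*) [Group G] : Prop :=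
  ∃ μ : Set G → ℝ,
    (∀ Z : Set G, 0 ≤ μ Z ∧ μ Z ≤ 1) ∧
    μ Set.univ = 1 ∧
    (∀ Z₁ Z₂ : Set G, Disjoint Z₁ Z₂ → μ (Z₁ ∪ Z₂) = μ Z₁ + μ Z₂) ∧
    (∀ (Z : Set G) (g : G), μ ((· * g) '' Z) = μ Z)

open scoped Pointwise
open Filter Topology
set_option linter.unusedSectionVars false
set_option maxHeartbeats 1000000



section Aux
variable {G : Type*} [Group G] {ι : Type*} [Fintype ι] [DecidableEq G] (A : ι → G)

/-- letters: all generators, inverses, and 1. -/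
def lettersOf : Finset G := insert 1 (Finset.image (genOf A) Finset.univ)

lemma one_mem_lettersOf : (1 : G) ∈ lettersOf A := Finset.mem_insert_self _ _

lemma genOf_inv (p : ι × Bool) : (genOf A p)⁻¹ = genOf A (p.1, !p.2) := by
  cases p with
  | mk i b => cases b <;> simp [genOf]

lemma inv_mem_lettersOf {s : G} (hs : s ∈ lettersOf A) : s⁻¹ ∈ lettersOf A := by
  rcases Finset.mem_insert.1 hs with h | h
  · simp [h, lettersOf]
  · rcases Finset.mem_image.1 h with ⟨p, -, rfl⟩
    rw [genOf_inv]
    exact Finset.mem_insert_of_mem (Finset.mem_image.2 ⟨_, Finset.mem_univ _, rfl⟩)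

/-- ball of radius k (as products of ≤ k letters). -/
def ballF (k : ℕ) : Finset G := (lettersOf A) ^ k

lemma mem_ballF_iff {k : ℕ} {g : G} :
    g ∈ ballF A k ↔ ∃ l : List (ι × Bool), l.length ≤ k ∧ g = (l.map (genOf A)).prod := by
  constructor
  · induction k generalizing g with
    | zero =>
      intro hg
      rw [ballF, pow_zero, Finset.mem_one] at hg
      exact ⟨[], by simp [hg]⟩
    | succ k ih =>
      intro hg
      rw [ballF, pow_succ] at hg
      rcases Finset.mem_mul.1 hg with ⟨x, hx, s, hs, rfl⟩
      rcases ih hx with ⟨l, hl, rfl⟩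
      rcases Finset.mem_insert.1 hs with rfl | hss
      · exact ⟨l, le_trans hl (Nat.le_succ _), by simp⟩
      · rcases Finset.mem_image.1 hss with ⟨p, -, rfl⟩
        exact ⟨l ++ [p], by simpa using hl, by simp⟩
  · rintro ⟨l, hl, rfl⟩
    induction k generalizing l with
    | zero =>
      rw [Nat.le_zero, List.length_eq_zero_iff] at hl
      subst hl
      simp [ballF]
    | succ k ih =>
      cases l with
      | nil =>
        rw [ballF, pow_succ]
        simpa [ballF] using Finset.mul_mem_mul (ih [] (by simp)) (one_mem_lettersOf A)
      | cons p t =>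
        rw [ballF, pow_succ']
        have h1 : genOf A p ∈ lettersOf A :=
          Finset.mem_insert_of_mem (Finset.mem_image.2 ⟨_, Finset.mem_univ _, rfl⟩)
        have h2 := ih t (by simpa using Nat.succ_le_succ_iff.1 (by simpa using hl))
        simpa [ballF] using Finset.mul_mem_mul h1 h2

lemma exists_inv_list (l : List (ι × Bool)) :
    ∃ l' : List (ι × Bool), l'.length = l.length ∧
      (l'.map (genOf A)).prod = ((l.map (genOf A)).prod)⁻¹ := by
  induction l with
  | nil => exact ⟨[], rfl, by simp⟩
  | cons p t ih =>
    rcases ih with ⟨l', hl', hp⟩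
    refine ⟨l' ++ [(p.1, !p.2)], by simp [hl'], ?_⟩
    simp [hp, ← genOf_inv, mul_inv_rev]

lemma inv_mem_ballF {k : ℕ} {g : G} (hg : g ∈ ballF A k) : g⁻¹ ∈ ballF A k := by
  rcases (mem_ballF_iff A).1 hg with ⟨l, hl, rfl⟩
  rcases exists_inv_list A l with ⟨l', hl', hp⟩
  exact (mem_ballF_iff A).2 ⟨l', hl'.le.trans hl, hp.symm⟩

lemma subset_mul_letters (F : Finset G) : F ⊆ F * lettersOf A := fun x hx => by
  simpa using Finset.mul_mem_mul hx (one_mem_lettersOf A)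

lemma exists_word (hA : Subgroup.closure (Set.range A) = ⊤) (g : G) :
    ∃ l : List (ι × Bool), g = (l.map (genOf A)).prod := by
  have hg : g ∈ Subgroup.closure (Set.range A) := by rw [hA]; trivial
  induction hg using Subgroup.closure_induction with
  | mem x hx =>
    rcases hx with ⟨i, rfl⟩
    exact ⟨[(i, true)], by simp [genOf]⟩
  | one => exact ⟨[], by simp⟩
  | mul x y hx hy ihx ihy =>
    rcases ihx with ⟨l₁, rfl⟩
    rcases ihy with ⟨l₂, rfl⟩
    exact ⟨l₁ ++ l₂, by simp⟩
  | inv x hx ihx =>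
    rcases ihx with ⟨l, rfl⟩
    rcases exists_inv_list A l with ⟨l', -, hp⟩
    exact ⟨l', hp.symm⟩

end Aux


section Mean
variable {G : Type*} [Group G]

lemma mean_sum {μ : Set G → ℝ}
    (hadd : ∀ Z₁ Z₂ : Set G, Disjoint Z₁ Z₂ → μ (Z₁ ∪ Z₂) = μ Z₁ + μ Z₂)
    {γ : Type*} (s : Finset γ) (X : γ → Set G)
    (hdisj : ∀ a ∈ s, ∀ b ∈ s, a ≠ b → Disjoint (X a) (X b)) :
    μ (⋃ d ∈ s, X d) = ∑ d ∈ s, μ (X d) := by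
  classical
  induction s using Finset.induction_on with
  | empty =>
    have h := hadd ∅ ∅ (by simp)
    simp only [Set.union_self] at h
    have h0 : μ (∅ : Set G) = 0 := by linarith
    simp [h0]
  | @insert a s hni ih =>
    have hd : Disjoint (X a) (⋃ d ∈ s, X d) := by
      rw [Set.disjoint_iUnion₂_right]
      intro b hb
      exact hdisj a (Finset.mem_insert_self _ _) b (Finset.mem_insert_of_mem hb)
        (by rintro rfl; exact hni hb)
    rw [Finset.set_biUnion_insert, hadd _ _ hd, Finset.sum_insert hni,
      ih (fun x hx y hy => hdisj x (Finset.mem_insert_of_mem hx) y (Finset.mem_insert_of_mem hy))]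

lemma mean_mono {μ : Set G → ℝ}
    (hb : ∀ Z : Set G, 0 ≤ μ Z ∧ μ Z ≤ 1) (hu : μ Set.univ = 1)
    (hadd : ∀ Z₁ Z₂ : Set G, Disjoint Z₁ Z₂ → μ (Z₁ ∪ Z₂) = μ Z₁ + μ Z₂)
    (Y : Set G) : μ Y ≤ 1 := (hb Y).2

lemma not_amenable_of_doubling {ι : Type*} [Fintype ι] [DecidableEq G] (A : ι → G)
    (ψ : G → G) (K : ℕ)
    (hw : ∀ g : G, ∃ l : List (ι × Bool),
      l.length ≤ K ∧ ψ g = g * (l.map (genOf A)).prod)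
    (hs : ∀ h : G, ∃ g₁ g₂ : G, g₁ ≠ g₂ ∧ ψ g₁ = h ∧ ψ g₂ = h) :
    ¬ IsAmenable G := by
  rintro ⟨μ, hb, hu, hadd, hinv⟩
  choose g₁ g₂ hne h1 h2 using hs
  -- displacements
  have hdisp : ∀ (f : G → G), (∀ h, ψ (f h) = h) →
      (∀ h, h⁻¹ * f h ∈ ballF A K) ∧ Function.Injective f ∧ μ (f '' Set.univ) = 1 := by
    intro f hf
    have hinj : Function.Injective f := fun a b hab => by
      rw [← hf a, ← hf b, hab]
    have hd : ∀ h, h⁻¹ * f h ∈ ballF A K := by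
      intro h
      rcases hw (f h) with ⟨l, hl, hword⟩
      rw [hf h] at hword
      have : h⁻¹ * f h = ((l.map (genOf A)).prod)⁻¹ := by
        nth_rewrite 1 [hword]; group
      rw [this]
      exact inv_mem_ballF A ((mem_ballF_iff A).2 ⟨l, hl, rfl⟩)
    refine ⟨hd, hinj, ?_⟩
    set D : Finset G := ballF A K with hD
    set X : G → Set G := fun d => {h : G | h⁻¹ * f h = d} with hX
    have hcover : (⋃ d ∈ D, X d) = Set.univ := by
      ext h
      simp only [Set.mem_iUnion, Set.mem_univ, iff_true, hX, Set.mem_setOf_eq]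
      exact ⟨h⁻¹ * f h, hd h, rfl⟩
    have hXdisj : ∀ a ∈ D, ∀ b ∈ D, a ≠ b → Disjoint (X a) (X b) := by
      intro a _ b _ hab
      rw [Set.disjoint_left]
      rintro h (ha : _ = a) (hbmem : _ = b)
      exact hab (ha ▸ hbmem ▸ rfl)
    have himg : ∀ d, f '' X d = (· * d) '' X d := by
      intro d
      ext x
      simp only [Set.mem_image, hX, Set.mem_setOf_eq]
      constructor
      · rintro ⟨h, hh, rfl⟩
        exact ⟨h, hh, by rw [← hh]; group⟩
      · rintro ⟨h, hh, rfl⟩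
        exact ⟨h, hh, by rw [← hh]; group⟩
    have hfim : f '' Set.univ = ⋃ d ∈ D, f '' X d := by
      rw [← hcover, Set.image_iUnion₂]
    have hfdisj : ∀ a ∈ D, ∀ b ∈ D, a ≠ b → Disjoint (f '' X a) (f '' X b) :=
      fun a ha b hb hab => Set.disjoint_image_of_injective hinj (hXdisj a ha b hb hab)
    rw [hfim, mean_sum hadd D _ hfdisj]
    have : ∀ d ∈ D, μ (f '' X d) = μ (X d) := by
      intro d _
      rw [himg d, hinv]
    rw [Finset.sum_congr rfl this, ← mean_sum hadd D X hXdisj, hcover, hu]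
  have H1 := hdisp g₁ h1
  have H2 := hdisp g₂ h2
  have hdisjR : Disjoint (g₁ '' Set.univ) (g₂ '' Set.univ) := by
    rw [Set.disjoint_left]
    rintro x ⟨a, -, rfl⟩ ⟨b, -, hba⟩
    have hab : a = b := by rw [← h1 a, ← h2 b, hba]
    subst hab
    exact hne a hba.symm
  have h2le : μ (g₁ '' Set.univ ∪ g₂ '' Set.univ) = 2 := by
    rw [hadd _ _ hdisjR, H1.2.2, H2.2.2]; norm_num
  have := (hb (g₁ '' Set.univ ∪ g₂ '' Set.univ)).2
  linarith

end Mean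

section Hall
variable {G : Type*} [Group G] {ι : Type*} [Fintype ι] [DecidableEq G] (A : ι → G)

lemma doubling_of_card (K : ℕ) (hK : 0 < K)
    (hd : ∀ F : Finset G, F.Nonempty → 2 * F.card ≤ (F * ballF A K).card) :
    ∃ (ψ : G → G) (K' : ℕ), 0 < K' ∧
      (∀ g : G, ∃ l : List (ι × Bool),
        l.length ≤ K' ∧ ψ g = g * (l.map (genOf A)).prod) ∧
      (∀ h : G, ∃ g₁ g₂ : G, g₁ ≠ g₂ ∧ ψ g₁ = h ∧ ψ g₂ = h) := by
  classical
  set t : G × Bool → Finset G := fun p => (ballF A K).image (p.1 * ·) with ht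
  have hall : ∀ T : Finset (G × Bool), T.card ≤ (T.biUnion t).card := by
    intro T
    rcases T.eq_empty_or_nonempty with rfl | hT
    · simp
    set F : Finset G := T.image Prod.fst with hF
    have hFne : F.Nonempty := hT.image _
    have h1 : T.card ≤ 2 * F.card := by
      have hsub : T ⊆ F ×ˢ (Finset.univ : Finset Bool) := by
        intro p hp
        exact Finset.mem_product.2 ⟨Finset.mem_image_of_mem _ hp, Finset.mem_univ _⟩
      calc T.card ≤ (F ×ˢ (Finset.univ : Finset Bool)).card := Finset.card_le_card hsub
        _ = F.card * 2 := by rw [Finset.card_product]; simp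
        _ = 2 * F.card := mul_comm _ _
    have h2 : T.biUnion t = F * ballF A K := by
      ext x
      simp only [Finset.mem_biUnion, ht, Finset.mem_image, Finset.mem_mul, hF]
      constructor
      · rintro ⟨p, hp, w, hw, rfl⟩
        exact ⟨p.1, ⟨p, hp, rfl⟩, w, hw, rfl⟩
      · rintro ⟨a, ⟨p, hp, rfl⟩, w, hw, rfl⟩
        exact ⟨p, hp, w, hw, rfl⟩
    rw [h2]
    exact h1.trans (hd F hFne)
  obtain ⟨Φ, hΦinj, hΦmem⟩ := (Finset.all_card_le_biUnion_card_iff_exists_injective t).1 hall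
  set ψ : G → G := fun g => if hg : ∃ p, Φ p = g then hg.choose.1 else g with hψ
  have hψΦ : ∀ p : G × Bool, ψ (Φ p) = p.1 := by
    intro p
    have hg : ∃ q, Φ q = Φ p := ⟨p, rfl⟩
    have : hg.choose = p := hΦinj hg.choose_spec
    simp only [hψ, dif_pos hg, this]
  refine ⟨ψ, K, hK, ?_, ?_⟩
  · intro g
    by_cases hg : ∃ p, Φ p = g
    · rcases hg with ⟨p, rfl⟩
      rcases Finset.mem_image.1 (hΦmem p) with ⟨w, hw, hpw⟩
      have hwinv := inv_mem_ballF A hw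
      rcases (mem_ballF_iff A).1 hwinv with ⟨l, hl, hlw⟩
      refine ⟨l, hl, ?_⟩
      rw [hψΦ, ← hlw, ← hpw]
      group
    · refine ⟨[], by simp, ?_⟩
      simp only [hψ, dif_neg hg, List.map_nil, List.prod_nil, mul_one]
  · intro h
    refine ⟨Φ (h, false), Φ (h, true), ?_, hψΦ _, hψΦ _⟩
    intro heq
    have := hΦinj heq
    simp at this

end Hall

section Amen
variable {G : Type*} [Group G] {ι : Type*} [Fintype ι] [DecidableEq G] (A : ι → G)

lemma one_mem_pow_letters (j : ℕ) : (1 : G) ∈ (lettersOf A) ^ j := by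
  induction j with
  | zero => simp
  | succ j ih => rw [pow_succ]; simpa using Finset.mul_mem_mul ih (one_mem_lettersOf A)

lemma folner_step (hnd : ∀ K : ℕ, 0 < K → ∃ F : Finset G, F.Nonempty ∧
      ((F * ballF A K).card : ℝ) < 2 * F.card) (n : ℕ) :
    ∃ E : Finset G, E.Nonempty ∧
      ((E * lettersOf A).card : ℝ) ≤ (1 + 1/(n+1)) * E.card := by
  obtain ⟨F, hFne, hFlt⟩ := hnd (n + 1) (Nat.succ_pos n)
  set S := lettersOf A with hS
  set c : ℕ → ℝ := fun j => ((F * S ^ j).card : ℝ) with hc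
  have hsub : ∀ j, F ⊆ F * S ^ j := fun j x hx => by
    simpa using Finset.mul_mem_mul hx (one_mem_pow_letters A j)
  have hcpos : ∀ j, 0 < c j := fun j => by
    have h : (F * S ^ j).Nonempty := hFne.mono (hsub j)
    have := Finset.card_pos.2 h
    simp only [hc]
    exact_mod_cast this
  have hc0 : c 0 = F.card := by simp [hc]
  have key : ∃ j, c (j + 1) ≤ (1 + 1/(n+1)) * c j := by
    by_contra hcon
    push_neg at hcon
    have hstep : ∀ j, (1 + 1/((n:ℝ)+1)) ^ j * c 0 ≤ c j := by
      intro j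
      induction j with
      | zero => simp
      | succ j ih =>
        have hδ : (0:ℝ) < 1 + 1/((n:ℝ)+1) := by positivity
        calc (1 + 1/((n:ℝ)+1)) ^ (j+1) * c 0
            = (1 + 1/((n:ℝ)+1)) * ((1 + 1/((n:ℝ)+1)) ^ j * c 0) := by ring
          _ ≤ (1 + 1/((n:ℝ)+1)) * c j := by nlinarith
          _ ≤ c (j + 1) := (hcon j).le
    have hbern : (2:ℝ) ≤ (1 + 1/((n:ℝ)+1)) ^ (n+1) := by
      have h0 : (0:ℝ) ≤ 1/((n:ℝ)+1) := by positivity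
      have h := one_add_mul_le_pow (a := 1/((n:ℝ)+1)) (by linarith) (n+1)
      have hne : ((n:ℝ)+1) ≠ 0 := by positivity
      push_cast at h
      rw [show ((n:ℝ)+1) * (1/((n:ℝ)+1)) = 1 by field_simp] at h
      linarith
    have hlt : c (n+1) < 2 * c 0 := by
      have h : ((F * ballF A (n+1)).card : ℝ) < 2 * F.card := hFlt
      simpa [hc, hc0, ballF, hS] using h
    have := hstep (n+1)
    nlinarith [hcpos 0]
  obtain ⟨j, hj⟩ := key
  refine ⟨F * S ^ j, hFne.mono (hsub j), ?_⟩
  have h : F * S ^ j * S = F * S ^ (j+1) := by rw [pow_succ, mul_assoc]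
  rw [h]
  exact hj

/-- Core counting estimate: shifting the test set by one letter changes counts by at most
the boundary size. -/
lemma count_est (Z : Set G) {s : G} [DecidablePred (· ∈ Z)]
    [DecidablePred (fun x : G => x * s⁻¹ ∈ Z)] (hs' : s⁻¹ ∈ lettersOf A) (En : Finset G) :
    |((En.filter (fun x => x * s⁻¹ ∈ Z)).card : ℝ) - ((En.filter (· ∈ Z)).card : ℝ)|
      ≤ ((En * lettersOf A).card : ℝ) - (En.card : ℝ) := by
  classical
  set E' : Finset G := En.image (· * s⁻¹) with hE'
  have hinj : Function.Injective (· * s⁻¹ : G → G) := mul_left_injective _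
  have hcardeq : E'.card = En.card := Finset.card_image_of_injective _ hinj
  have h1 : (E'.filter (· ∈ Z)).card = (En.filter (fun x => x * s⁻¹ ∈ Z)).card := by
    rw [hE', Finset.filter_image, Finset.card_image_of_injective _ hinj]
    congr
  have h2 : (E'.filter (· ∈ Z)).card ≤ (En.filter (· ∈ Z)).card + (E' \ En).card := by
    calc (E'.filter (· ∈ Z)).card ≤ ((En.filter (· ∈ Z)) ∪ (E' \ En)).card := by
          apply Finset.card_le_card
          intro x hx
          rcases Finset.mem_filter.1 hx with ⟨hxE', hxZ⟩
          by_cases hxEn : x ∈ En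
          · exact Finset.mem_union_left _ (Finset.mem_filter.2 ⟨hxEn, hxZ⟩)
          · exact Finset.mem_union_right _ (Finset.mem_sdiff.2 ⟨hxE', hxEn⟩)
      _ ≤ _ := Finset.card_union_le _ _
  have h4 : (En \ E').card = (E' \ En).card := by
    have k1 := Finset.card_sdiff_add_card_inter En E'
    have k2 := Finset.card_sdiff_add_card_inter E' En
    have k3 : (En ∩ E').card = (E' ∩ En).card := by rw [Finset.inter_comm]
    omega
  have h3 : (En.filter (· ∈ Z)).card
      ≤ (En.filter (fun x => x * s⁻¹ ∈ Z)).card + (E' \ En).card := by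
    rw [← h1, ← h4]
    calc (En.filter (· ∈ Z)).card ≤ ((E'.filter (· ∈ Z)) ∪ (En \ E')).card := by
          apply Finset.card_le_card
          intro x hx
          rcases Finset.mem_filter.1 hx with ⟨hxEn, hxZ⟩
          by_cases hxE' : x ∈ E'
          · exact Finset.mem_union_left _ (Finset.mem_filter.2 ⟨hxE', hxZ⟩)
          · exact Finset.mem_union_right _ (Finset.mem_sdiff.2 ⟨hxEn, hxE'⟩)
      _ ≤ _ := Finset.card_union_le _ _
  have hE'sub : E' ⊆ En * lettersOf A := by
    intro x hx
    rcases Finset.mem_image.1 hx with ⟨y, hy, rfl⟩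
    exact Finset.mul_mem_mul hy hs'
  have h6 : En.card ≤ (En * lettersOf A).card :=
    Finset.card_le_card (subset_mul_letters A En)
  have h5 : (E' \ En).card ≤ (En * lettersOf A).card - En.card := by
    calc (E' \ En).card ≤ ((En * lettersOf A) \ En).card :=
          Finset.card_le_card (fun x hx => by
            rcases Finset.mem_sdiff.1 hx with ⟨hx1, hx2⟩
            exact Finset.mem_sdiff.2 ⟨hE'sub hx1, hx2⟩)
      _ = (En * lettersOf A).card - En.card := by
          rw [Finset.card_sdiff_of_subset (subset_mul_letters A En)]
  have he_le : ((E' \ En).card : ℝ) ≤ ((En * lettersOf A).card : ℝ) - (En.card : ℝ) := by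
    have := (Nat.cast_le (α := ℝ)).2 h5
    rwa [Nat.cast_sub h6] at this
  have h2' : ((En.filter (fun x => x * s⁻¹ ∈ Z)).card : ℝ)
      ≤ ((En.filter (· ∈ Z)).card : ℝ) + ((E' \ En).card : ℝ) := by
    exact_mod_cast h1 ▸ h2
  have h3' : ((En.filter (· ∈ Z)).card : ℝ)
      ≤ ((En.filter (fun x => x * s⁻¹ ∈ Z)).card : ℝ) + ((E' \ En).card : ℝ) := by
    exact_mod_cast h3
  rw [abs_sub_le_iff]
  constructor <;> linarith

lemma amenable_of_no_doubling (hA : Subgroup.closure (Set.range A) = ⊤)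
    (hnd : ∀ K : ℕ, 0 < K → ∃ F : Finset G, F.Nonempty ∧
      ((F * ballF A K).card : ℝ) < 2 * F.card) :
    IsAmenable G := by
  classical
  choose E hEne hEc using folner_step A hnd
  set U : Ultrafilter ℕ := Filter.hyperfilter ℕ with hUdef
  set fm : Set G → ℕ → ℝ := fun Z n => (((E n).filter (· ∈ Z)).card : ℝ) / ((E n).card : ℝ)
    with hfm
  have hcardpos : ∀ n, (0:ℝ) < ((E n).card : ℝ) := fun n => by
    exact_mod_cast Finset.card_pos.2 (hEne n)
  have hfm01 : ∀ Z n, fm Z n ∈ Set.Icc (0:ℝ) 1 := by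
    intro Z n
    constructor
    · apply div_nonneg (by positivity) (hcardpos n).le
    · rw [hfm]
      rw [div_le_one (hcardpos n)]
      exact_mod_cast Finset.card_le_card (Finset.filter_subset _ _)
  have hex : ∀ Z : Set G, ∃ L, Tendsto (fm Z) (U : Filter ℕ) (𝓝 L) ∧ L ∈ Set.Icc (0:ℝ) 1 := by
    intro Z
    obtain ⟨L, hL1, hL2⟩ := (isCompact_Icc (a := (0:ℝ)) (b := 1)).ultrafilter_le_nhds
      (U.map (fm Z)) (le_principal_iff.2 (Filter.mem_map.2 (Filter.univ_mem'
        (fun n => hfm01 Z n))))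
    rw [Ultrafilter.coe_map] at hL2
    exact ⟨L, hL2, hL1⟩
  set μ : Set G → ℝ := fun Z => (hex Z).choose with hμ
  have hT : ∀ Z, Tendsto (fm Z) (U : Filter ℕ) (𝓝 (μ Z)) := fun Z => (hex Z).choose_spec.1
  have huniq : ∀ (Z : Set G) (L : ℝ), Tendsto (fm Z) (U : Filter ℕ) (𝓝 L) → μ Z = L :=
    fun Z L h => tendsto_nhds_unique (hT Z) h
  -- invariance for letters
  have hletter : ∀ s ∈ lettersOf A, ∀ Z : Set G, μ ((· * s) '' Z) = μ Z := by
    intro s hs Z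
    have hs' : s⁻¹ ∈ lettersOf A := inv_mem_lettersOf A hs
    have hmemiff : ∀ x : G, x ∈ (· * s) '' Z ↔ x * s⁻¹ ∈ Z := by
      intro x
      constructor
      · rintro ⟨z, hz, rfl⟩; simpa using hz
      · intro h; exact ⟨x * s⁻¹, h, by group⟩
    have hfmeq : ∀ n, fm ((· * s) '' Z) n =
        (((E n).filter (fun x => x * s⁻¹ ∈ Z)).card : ℝ) / ((E n).card : ℝ) := by
      intro n
      have hfe : (E n).filter (· ∈ (· * s) '' Z) = (E n).filter (fun x => x * s⁻¹ ∈ Z) :=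
        Finset.filter_congr (fun x _ => by exact hmemiff x)
      rw [hfm]
      simp only
      rw [hfe]
    have key : ∀ n, |fm ((· * s) '' Z) n - fm Z n| ≤ 1/((n:ℝ)+1) := by
      intro n
      have hcp := hcardpos n
      have hest := count_est A Z hs' (E n)
      have hbd : ((E n * lettersOf A).card : ℝ) - (E n).card
          ≤ ((E n).card : ℝ) * (1/((n:ℝ)+1)) := by
        have := hEc n
        nlinarith
      rw [hfmeq n, hfm]
      simp only
      rw [div_sub_div_same, abs_div, abs_of_pos hcp, div_le_iff₀ hcp]
      calc |(((E n).filter (fun x => x * s⁻¹ ∈ Z)).card : ℝ)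
            - (((E n).filter (· ∈ Z)).card : ℝ)|
          ≤ ((E n * lettersOf A).card : ℝ) - (E n).card := hest
        _ ≤ ((E n).card : ℝ) * (1/((n:ℝ)+1)) := hbd
        _ = 1/((n:ℝ)+1) * ((E n).card : ℝ) := by ring
    have hb0 : Tendsto (fun n : ℕ => 1/((n:ℝ)+1)) (U : Filter ℕ) (𝓝 0) :=
      tendsto_one_div_add_atTop_nhds_zero_nat.mono_left Nat.hyperfilter_le_atTop
    have hdiff : Tendsto (fun n => fm ((· * s) '' Z) n - fm Z n) (U : Filter ℕ) (𝓝 0) := by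
      apply tendsto_of_tendsto_of_tendsto_of_le_of_le (g := fun n : ℕ => -(1/((n:ℝ)+1)))
        (h := fun n : ℕ => 1/((n:ℝ)+1))
      · simpa using hb0.neg
      · exact hb0
      · intro n; exact neg_le_of_abs_le (key n)
      · intro n; exact le_of_abs_le (key n)
    have hfin : Tendsto (fm ((· * s) '' Z)) (U : Filter ℕ) (𝓝 (0 + μ Z)) := by
      have := hdiff.add (hT Z)
      simpa using this
    rw [huniq _ _ hfin, zero_add]
  -- invariance for words
  have hwordinv : ∀ (l : List (ι × Bool)) (Z : Set G),
      μ ((· * (l.map (genOf A)).prod) '' Z) = μ Z := by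
    intro l
    induction l with
    | nil => intro Z; simp
    | cons p t ih =>
      intro Z
      have hsplit : (· * (((p :: t).map (genOf A)).prod)) '' Z =
          (· * ((t.map (genOf A)).prod)) '' ((· * genOf A p) '' Z) := by
        rw [Set.image_image]
        simp only [List.map_cons, List.prod_cons, mul_assoc]
      rw [hsplit, ih, hletter (genOf A p)
        (Finset.mem_insert_of_mem (Finset.mem_image.2 ⟨_, Finset.mem_univ _, rfl⟩))]
  refine ⟨μ, fun Z => (hex Z).choose_spec.2, ?_, ?_, ?_⟩
  · -- univ
    apply huniq
    have h1 : ∀ n, fm Set.univ n = 1 := by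
      intro n
      rw [hfm]
      simp only [Set.mem_univ, Finset.filter_true_of_mem (fun _ _ => trivial)]
      exact div_self (hcardpos n).ne'
    rw [show fm Set.univ = fun _ : ℕ => (1:ℝ) from funext h1]
    exact tendsto_const_nhds
  · -- additivity
    intro Z₁ Z₂ hdisj
    have hpt : ∀ n, fm (Z₁ ∪ Z₂) n = fm Z₁ n + fm Z₂ n := by
      intro n
      rw [hfm]
      simp only
      rw [← add_div]
      congr 1
      have hdf : Disjoint ((E n).filter (· ∈ Z₁)) ((E n).filter (· ∈ Z₂)) := by
        rw [Finset.disjoint_left]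
        intro x hx1 hx2
        exact Set.disjoint_left.1 hdisj (Finset.mem_filter.1 hx1).2 (Finset.mem_filter.1 hx2).2
      have hfe : (E n).filter (· ∈ Z₁ ∪ Z₂) =
          (E n).filter (· ∈ Z₁) ∪ (E n).filter (· ∈ Z₂) := by
        ext x
        simp [Finset.mem_filter, Finset.mem_union, and_or_left]
      have hcard : (((E n).filter (· ∈ Z₁ ∪ Z₂)).card : ℝ)
          = (((E n).filter (· ∈ Z₁)).card : ℝ) + (((E n).filter (· ∈ Z₂)).card : ℝ) := by
        rw [hfe, Finset.card_union_of_disjoint hdf]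
        push_cast
        ring
      convert hcard using 3
      exact Finset.filter_congr_decidable _ _ _
    apply huniq
    rw [show fm (Z₁ ∪ Z₂) = fun n => fm Z₁ n + fm Z₂ n from funext hpt]
    exact (hT Z₁).add (hT Z₂)
  · -- invariance
    intro Z g
    obtain ⟨l, rfl⟩ := exists_word A hA g
    exact hwordinv l Z

end Amen

/-- Let `G` be a group with finite generating set `A`. Then `G` is
non-amenable if and only if `G` admits a doubling function: a map `ψ : G → G` such that the
word-metric distances `d(g, ψ(g))` are bounded above by a constant `K > 0` over all `g ∈ G`
(i.e. `ψ g` is obtained from `g` by multiplying on the right by a product of at most `K`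
letters from `A ∪ A⁻¹`), and every element of `G` has at least two preimages under `ψ`. -/
theorem not_amenable_iff_exists_doubling {G : Type*} [Group G]
    {ι : Type*} [Fintype ι] (A : ι → G)
    (hA : Subgroup.closure (Set.range A) = ⊤) :
    ¬ IsAmenable G ↔
      ∃ (ψ : G → G) (K : ℕ), 0 < K ∧
        (∀ g : G, ∃ l : List (ι × Bool),
          l.length ≤ K ∧ ψ g = g * (l.map (genOf A)).prod) ∧
        (∀ h : G, ∃ g₁ g₂ : G, g₁ ≠ g₂ ∧ ψ g₁ = h ∧ ψ g₂ = h) := by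
  classical
  constructor
  · intro hna
    by_cases hdbl : ∃ K : ℕ, 0 < K ∧
        ∀ F : Finset G, F.Nonempty → 2 * F.card ≤ (F * ballF A K).card
    · obtain ⟨K, hK, hd⟩ := hdbl
      exact doubling_of_card A K hK hd
    · exfalso
      apply hna
      apply amenable_of_no_doubling A hA
      intro K hK
      push_neg at hdbl
      obtain ⟨F, hFne, hFlt⟩ := hdbl K hK
      exact ⟨F, hFne, by exact_mod_cast hFlt⟩
  · rintro ⟨ψ, K, hK, hw, hs⟩
    exact not_amenable_of_doubling A ψ K hw hs
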